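/- Consider the two-level non-symmetric Gaussian hierarchical model with bespoke parametrization indexed by indicators (λ_1,…,λ_I) ∈ {0,1}^I. The L² rate of convergence of the deterministic-scan Gibbs sampler equals ρ = [Σ_{i:λ_i=1} τ̃_i · τ̃_i/(τ̃_i+τ_a) + Σ_{i:λ_i=0} τ_a · τ_a/(τ̃_i+τ_a)] / [Σ_{i:λ_i=1} τ̃_i + Σ_{i:λ_i=0} τ_a], where τ̃_i = J_i τ_{e,i}. -/

import Mathlib

open Matrix Polynomial

set_option maxRecDepth 4000

lemma stmt6_spec_iff {n : Type*} [Fintype n] [DecidableEq n] (M : Matrix n n ℝ) (x : ℝ) :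
    M.charpoly.eval x = ((algebraMap ℝ (Matrix n n ℝ)) x - M).det := by
  rw [Matrix.charpoly, ← Polynomial.coe_evalRingHom, RingHom.map_det]
  congr 1
  ext i j
  by_cases h : i = j
  · subst h
    simp [Matrix.charmatrix_apply_eq, Matrix.algebraMap_eq_diagonal]
  · simp [Matrix.charmatrix_apply_ne _ _ _ h, Matrix.algebraMap_eq_diagonal,
      Matrix.diagonal_apply_ne _ h, h]

lemma stmt6_mem_spec {n : Type*} [Fintype n] [DecidableEq n] (M : Matrix n n ℝ) (x : ℝ) :
    x ∈ spectrum ℝ M ↔ M.charpoly.eval x = 0 := by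
  rw [spectrum.mem_iff, Matrix.isUnit_iff_isUnit_det, isUnit_iff_ne_zero, not_not,
    stmt6_spec_iff]


/-- Two-level non-symmetric Gaussian hierarchical model NS2 with bespoke
parametrization `β_i = γ_i - λ_i μ`, `λ_i ∈ {0,1}` (`lam i = true` means
non-centred).  `Q` is the posterior precision matrix of `(μ, β_1, …, β_I)`,
`A α α' = -Q α α'/Q α α` (zero diagonal), `L` its strictly lower triangular
part in the sweep order (μ first), `B = (1-L)⁻¹(A-L)`.  The L² rate of
convergence of the deterministic-scan Gibbs sampler — the spectral radius of
`B` — equals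
`ρ = (∑_{i:λ_i=1} τ̃_i·τ̃_i/(τ̃_i+τ_a) + ∑_{i:λ_i=0} τ_a·τ_a/(τ̃_i+τ_a)) /
     (∑_{i:λ_i=1} τ̃_i + ∑_{i:λ_i=0} τ_a)`, with `τ̃_i = J_i τ_{e,i}`:
the charpoly of `B` is `X^I (X - ρ)` and `ρ` is the largest eigenvalue
modulus. -/
theorem stmt6 (I : ℕ) (J : Fin I → ℕ) (hJ : ∀ i, 0 < J i)
    (τa : ℝ) (hτa : 0 < τa) (τe : Fin I → ℝ) (hτe : ∀ i, 0 < τe i)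
    (lam : Fin I → Bool) :
    let t : Fin I → ℝ := fun i => (J i : ℝ) * τe i
    let Q : Matrix (Unit ⊕ Fin I) (Unit ⊕ Fin I) ℝ := Matrix.of fun α α' =>
      match α, α' with
      | Sum.inl _, Sum.inl _ => ∑ i, (if lam i then t i else τa)
      | Sum.inl _, Sum.inr i => if lam i then t i else -τa
      | Sum.inr i, Sum.inl _ => if lam i then t i else -τa
      | Sum.inr i, Sum.inr j => if i = j then τa + t i else 0
    let A : Matrix (Unit ⊕ Fin I) (Unit ⊕ Fin I) ℝ := Matrix.of fun α α' =>
      if α = α' then 0 else -Q α α' / Q α α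
    let L : Matrix (Unit ⊕ Fin I) (Unit ⊕ Fin I) ℝ := Matrix.of fun α α' =>
      match α, α' with
      | Sum.inr i, Sum.inl _ => A (Sum.inr i) (Sum.inl ())
      | _, _ => 0
    let B : Matrix (Unit ⊕ Fin I) (Unit ⊕ Fin I) ℝ := (1 - L)⁻¹ * (A - L)
    let ρ : ℝ :=
      (∑ i, if lam i then t i * (t i / (t i + τa)) else τa * (τa / (t i + τa))) /
      (∑ i, if lam i then t i else τa)
    B.charpoly = X ^ I * (X - C ρ) ∧
      IsGreatest {x : ℝ | ∃ μ ∈ spectrum ℝ B, x = |μ|} ρ := by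
  intro t Q A L B ρ
  have ht : ∀ i, 0 < t i := fun i => by
    have h1 : (0:ℝ) < (J i : ℝ) := by exact_mod_cast hJ i
    exact mul_pos h1 (hτe i)
  set s : ℝ := ∑ i, (if lam i then t i else τa) with hs
  set q : Fin I → ℝ := fun i => if lam i then t i else -τa with hq
  set v : Unit ⊕ Fin I → ℝ := Sum.elim (fun _ => (1:ℝ)) (fun i => -(q i)/(τa + t i)) with hv
  set w : Unit ⊕ Fin I → ℝ := Sum.elim (fun _ => (0:ℝ)) (fun j => -(q j)/s) with hw
  have hρdef : ρ = (∑ i, if lam i then t i * (t i / (t i + τa))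
      else τa * (τa / (t i + τa))) / s := rfl
  -- entry lemmas
  have hAul : ∀ j, A (Sum.inl ()) (Sum.inr j) = -(q j)/s := fun j => by simp [A, Q, q, s]
  have hAru : ∀ i, A (Sum.inr i) (Sum.inl ()) = -(q i)/(τa + t i) := fun i => by simp [A, Q, q]
  have hAdiag : ∀ α, A α α = 0 := fun α => by simp [A]
  have hArr : ∀ i j, A (Sum.inr i) (Sum.inr j) = 0 := fun i j => by
    by_cases h : i = j
    · subst h; exact hAdiag _
    · simp [A, Q, h]
  have hLru : ∀ i, L (Sum.inr i) (Sum.inl ()) = -(q i)/(τa + t i) := fun i => by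
    show A (Sum.inr i) (Sum.inl ()) = _
    exact hAru i
  have hLu : ∀ (u : Unit) β, L (Sum.inl u) β = 0 := fun u β => by rcases β with u'|j <;> simp [L]
  have hLr : ∀ i β, L β (Sum.inr i) = 0 := fun i β => by rcases β with u'|j <;> simp [L]
  have hL2 : L * L = 0 := by
    ext α α'
    rw [Matrix.mul_apply]
    refine Finset.sum_eq_zero fun β _ => ?_
    rcases β with u | j
    · rw [hLu u α', mul_zero]
    · rw [hLr j α, zero_mul]
  have hinv : (1 - L)⁻¹ = 1 + L := by
    apply Matrix.inv_eq_right_inv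
    have h : (1 - L) * (1 + L) = 1 - L * L := by noncomm_ring
    rw [h, hL2, sub_zero]
  have hB : B = Matrix.of fun α α' => v α * w α' := by
    show (1 - L)⁻¹ * (A - L) = _
    rw [hinv]
    ext α α'
    rw [Matrix.mul_apply, Fintype.sum_sum_type]
    rcases α with ⟨⟩ | i <;> rcases α' with ⟨⟩ | j <;>
      simp [Matrix.add_apply, Matrix.sub_apply, Matrix.one_apply, hAul, hAru, hAdiag, hArr,
        hLru, hLu, hLr, v, w]
  -- trace identity
  have hwv : w ⬝ᵥ v = ρ := by
    rw [dotProduct, Fintype.sum_sum_type, hρdef, Finset.sum_div]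
    simp only [hv, hw, Sum.elim_inl, Sum.elim_inr, mul_zero, zero_mul, mul_one,
      Finset.sum_const, Finset.card_univ, Fintype.card_unit, one_smul, smul_eq_mul]
    rw [zero_add]
    refine Finset.sum_congr rfl fun i _ => ?_
    simp only [hq]
    rcases h : lam i <;> simp only [h, if_true, if_false, Bool.false_eq_true] <;> ring
  have hρ0 : 0 ≤ ρ := by
    rw [hρdef]
    apply div_nonneg
    · refine Finset.sum_nonneg fun i _ => ?_
      have h1 := ht i
      rcases h : lam i <;> simp only [h, if_true, if_false, Bool.false_eq_true]
      · exact mul_nonneg hτa.le (div_nonneg hτa.le (by linarith))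
      · exact mul_nonneg h1.le (div_nonneg h1.le (by linarith))
    · rw [hs]
      refine Finset.sum_nonneg fun i _ => ?_
      have h1 := ht i
      rcases h : lam i <;> simp only [h, if_true, if_false, Bool.false_eq_true] <;> linarith
  have hcp : B.charpoly = X ^ I * (X - C ρ) := by
    apply Polynomial.eq_of_infinite_eval_eq
    have hinf : ({0}ᶜ : Set ℝ).Infinite := Set.Finite.infinite_compl (Set.finite_singleton 0)
    refine hinf.mono fun x hx => ?_
    have hx0 : x ≠ 0 := hx
    show eval x B.charpoly = eval x (X ^ I * (X - C ρ))
    rw [stmt6_spec_iff, hB]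
    set u' : Unit ⊕ Fin I → ℝ := fun α => -(x⁻¹ * v α) with hu'
    have key : (algebraMap ℝ (Matrix (Unit ⊕ Fin I) (Unit ⊕ Fin I) ℝ)) x -
        (Matrix.of fun α α' => v α * w α') = x • (1 + Matrix.replicateCol Unit u' * Matrix.replicateRow Unit w) := by
      ext α α'
      simp only [Matrix.algebraMap_eq_diagonal, Matrix.diagonal_apply, Matrix.sub_apply,
        Matrix.of_apply, Matrix.smul_apply, Matrix.add_apply, Matrix.one_apply,
        Matrix.mul_apply, Fintype.sum_unique, Matrix.replicateCol_apply, Matrix.replicateRow_apply,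
        smul_eq_mul, hu']
      by_cases h : α = α'
      · simp only [h, if_true, Pi.algebraMap_apply, Algebra.algebraMap_self, RingHom.id_apply]
        field_simp
        ring
      · simp only [if_neg h]
        field_simp
        ring
    rw [key, Matrix.det_smul, Matrix.det_one_add_replicateCol_mul_replicateRow]
    have hwu : w ⬝ᵥ u' = -(x⁻¹ * ρ) := by
      rw [← hwv, dotProduct, dotProduct, Finset.mul_sum, ← Finset.sum_neg_distrib]
      refine Finset.sum_congr rfl fun α _ => ?_
      simp only [hu']
      ring
    rw [hwu]
    have hcard : Fintype.card (Unit ⊕ Fin I) = 1 + I := by simp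
    rw [hcard]
    simp only [eval_mul, eval_pow, eval_X, eval_sub, eval_C]
    field_simp
    ring
  refine ⟨hcp, ⟨ρ, (stmt6_mem_spec B ρ).2 (by rw [hcp]; simp), (abs_of_nonneg hρ0).symm⟩, ?_⟩
  rintro x ⟨μ, hμ, rfl⟩
  have h0 := (stmt6_mem_spec B μ).1 hμ
  rw [hcp] at h0
  simp only [eval_mul, eval_pow, eval_X, eval_sub, eval_C] at h0
  rcases mul_eq_zero.1 h0 with h | h
  · have hμ0 : μ = 0 := by
      rcases Nat.eq_zero_or_pos I with hI | hI
      · rw [hI] at h; simp at h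
      · exact pow_eq_zero_iff hI.ne' |>.1 h
    simp [hμ0, hρ0]
  · rw [sub_eq_zero.1 h, abs_of_nonneg hρ0]
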